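/- Let Λ = kQ/I be a bound quiver algebra, α an arrow of Q, and p, q paths avoiding α with t(p) = s(α), s(q) = t(α) and at most one of p, q trivial. A finite generating set T of relations for I is strict α-monomial for p, q if and only if T satisfies properties (P) non-trivially for p, q. (Equivalently: the condition 'no proper subpath of pαq lies in the ideal generated by T' in the definition of strict α-monomial is redundant, being implied by the remaining conditions.) -/

import Mathlib

/-! Scaffolding: path algebras of quivers, admissible ideals, monomial arrow removal,
admissible orders and Gröbner bases, following Green. -/

open Quiver

/-- The type of all paths in a quiver `V` (with arbitrary source and target). -/
abbrev PathsIn (V : Type) [Quiver.{0} V] : Type := Σ a b : V, Quiver.Path a b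

namespace PathsIn

variable {V : Type} [Quiver.{0} V]

/-- The length of a path. -/
def len (u : PathsIn V) : ℕ := u.2.2.length

/-- `u.Divides w` : the path `u` is a subpath of (divides) the path `w`,
i.e. `w = r·u·s` for (possibly trivial) paths `r`, `s`. -/
def Divides (u w : PathsIn V) : Prop :=
  ∃ (a d : V) (r : Quiver.Path a u.1) (s : Quiver.Path u.2.1 d),
    w = ⟨a, d, (r.comp u.2.2).comp s⟩

/-- `u.ProperlyDivides w` : `u` is a proper subpath of `w`. -/
def ProperlyDivides (u w : PathsIn V) : Prop := u.Divides w ∧ u ≠ w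

/-- `s.OverlapsLeftWith t` : the path `s` overlaps with the path `t` from the left,
i.e. `t = r₁·r₂` and `s = r₂·r₃` for paths `r₁, r₂, r₃` with `r₂` non-trivial.
(Equivalently, `t` overlaps with `s` from the right.) -/
def OverlapsLeftWith (s t : PathsIn V) : Prop :=
  ∃ (x : V) (r₁ : Quiver.Path t.1 x) (r₂ : Quiver.Path x t.2.1)
    (r₃ : Quiver.Path t.2.1 s.2.1),
      0 < r₂.length ∧ t = ⟨t.1, t.2.1, r₁.comp r₂⟩ ∧ s = ⟨x, s.2.1, r₂.comp r₃⟩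

end PathsIn

/-- The path of length one corresponding to an arrow. -/
def arrowPath {V : Type} [Quiver.{0} V] {a b : V} (α : a ⟶ b) : PathsIn V :=
  ⟨a, b, α.toPath⟩

/-- A path `w` avoids the arrow `α` if `α` is not a subpath of `w`. -/
def AvoidsArrow {V : Type} [Quiver.{0} V] {a b : V} (α : a ⟶ b) (w : PathsIn V) : Prop :=
  ¬ (arrowPath α).Divides w

/-- `IsPathAlgebra k V A` : the `k`-algebra `A` is the path algebra `kQ` of the quiver `V`:
it has a `k`-basis indexed by the paths of `V`, multiplication of basis elements is given by
concatenation of composable paths (and is zero on non-composable ones), and the identity is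
the sum of the trivial paths. -/
structure IsPathAlgebra (k : Type) [Field k] (V : Type) [Quiver.{0} V] [Fintype V]
    (A : Type) [Ring A] [Algebra k A] : Type where
  basis : Module.Basis (PathsIn V) k A
  mul_matched : ∀ {a b c : V} (p : Quiver.Path a b) (q : Quiver.Path b c),
    basis ⟨a, b, p⟩ * basis ⟨b, c, q⟩ = basis ⟨a, c, p.comp q⟩
  mul_unmatched : ∀ {a b b' c : V} (p : Quiver.Path a b) (q : Quiver.Path b' c),
    b ≠ b' → basis ⟨a, b, p⟩ * basis ⟨b', c, q⟩ = 0
  one_def : (1 : A) = ∑ a : V, basis ⟨a, a, Quiver.Path.nil⟩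

namespace IsPathAlgebra

variable {k : Type} [Field k] {V : Type} [Quiver.{0} V] [Fintype V]
  {A : Type} [Ring A] [Algebra k A]

/-- The path `u` occurs in the element `z` of the path algebra (i.e. `u` has a non-zero
coefficient in `z`). -/
def OccursIn (PA : IsPathAlgebra k V A) (u : PathsIn V) (z : A) : Prop :=
  PA.basis.repr z u ≠ 0

/-- The path `u` occurs in the subset `T` of the path algebra. -/
def OccursInSet (PA : IsPathAlgebra k V A) (u : PathsIn V) (T : Set A) : Prop :=
  ∃ z ∈ T, PA.OccursIn u z

/-- An element of the path algebra avoids the arrow `α` if every path occurring in it does. -/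
def ElemAvoids (PA : IsPathAlgebra k V A) {a b : V} (α : a ⟶ b) (z : A) : Prop :=
  ∀ u : PathsIn V, PA.OccursIn u z → AvoidsArrow α u

/-- A relation: a linear combination of paths of length at least two having a common source
and a common target. -/
def IsRelation (PA : IsPathAlgebra k V A) (z : A) : Prop :=
  (∀ u : PathsIn V, PA.OccursIn u z → 2 ≤ u.len) ∧
  (∀ u v : PathsIn V, PA.OccursIn u z → PA.OccursIn v z → u.1 = v.1 ∧ u.2.1 = v.2.1)

end IsPathAlgebra

/-- The two-sided ideal of a ring generated by a subset, as a set: the additive closure of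
the set of elements `r * t * s` with `t` in the generating set. -/
def ringIdealSpan {A : Type} [Ring A] (T : Set A) : Set A :=
  (AddSubgroup.closure {y : A | ∃ r s : A, ∃ t ∈ T, y = r * t * s} : AddSubgroup A)

/-- An admissible ideal of the path algebra: a two-sided ideal `I` with `J^n ⊆ I ⊆ J²`
for some `n`, where `J` is the arrow ideal. -/
def IsAdmissibleIdeal {k : Type} [Field k] {V : Type} [Quiver.{0} V] [Fintype V]
    {A : Type} [Ring A] [Algebra k A] (PA : IsPathAlgebra k V A) (I : Set A) : Prop :=
  I = ringIdealSpan I ∧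
  (∃ n : ℕ, ∀ u : PathsIn V, n ≤ u.len → PA.basis u ∈ I) ∧
  (∀ z ∈ I, ∀ u : PathsIn V, PA.OccursIn u z → 2 ≤ u.len)

/-- A presentation of the quotient of an algebra `A` by (the set underlying) a two-sided
ideal `I`: a surjective algebra homomorphism with kernel `I`. -/
structure QuotPresentation (k : Type) [Field k] {A : Type} [Ring A] [Algebra k A]
    (I : Set A) (B : Type) [Ring B] [Algebra k B] : Type where
  proj : A →ₐ[k] B
  surj : Function.Surjective proj
  ker : ∀ z : A, proj z = 0 ↔ z ∈ I

section StrictMonomial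

variable {k : Type} [Field k] {V : Type} [Quiver.{0} V] [Fintype V]
  {A : Type} [Ring A] [Algebra k A]

/-- The path `pαq`. -/
def pathPAQ {V : Type} [Quiver.{0} V] {va vb xp yq : V} (α : va ⟶ vb)
    (p : Quiver.Path xp va) (q : Quiver.Path vb yq) : PathsIn V :=
  ⟨xp, yq, (p.comp α.toPath).comp q⟩

/-- Properties (P) for a subset `T` of the path algebra, relative to the arrow `α` and the
paths `p`, `q`:  (P1) every element of `T` other than `pαq` avoids `α`;
(P2) `p` does not overlap from the left with any path occurring in `T`;
(P2ᵒᵖ) `q` does not overlap from the right with any path occurring in `T`;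
(P3) no path occurring in `T` divides `p` or `q`. -/
structure SatisfiesP (PA : IsPathAlgebra k V A) {va vb xp yq : V} (α : va ⟶ vb)
    (T : Set A) (p : Quiver.Path xp va) (q : Quiver.Path vb yq) : Prop where
  p1 : ∀ z ∈ T, z ≠ PA.basis (pathPAQ α p q) → PA.ElemAvoids α z
  p2 : ∀ u : PathsIn V, PA.OccursInSet u T →
    ¬ PathsIn.OverlapsLeftWith ⟨xp, va, p⟩ u
  p2op : ∀ u : PathsIn V, PA.OccursInSet u T →
    ¬ PathsIn.OverlapsLeftWith u ⟨vb, yq, q⟩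
  p3 : ∀ u : PathsIn V, PA.OccursInSet u T →
    ¬ u.Divides ⟨xp, va, p⟩ ∧ ¬ u.Divides ⟨vb, yq, q⟩

/-- The common context for (strict) `α`-monomial generating sets: `p`, `q` avoid `α`,
at most one of them is trivial, and `T` is a finite generating set of relations for `I`. -/
structure IsMonGenData (PA : IsPathAlgebra k V A) {va vb xp yq : V} (α : va ⟶ vb)
    (I : Set A) (T : Set A) (p : Quiver.Path xp va) (q : Quiver.Path vb yq) : Prop where
  finite : T.Finite
  rels : ∀ t ∈ T, PA.IsRelation t
  gen : I = ringIdealSpan T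
  p_avoids : AvoidsArrow α (⟨xp, va, p⟩ : PathsIn V)
  q_avoids : AvoidsArrow α (⟨vb, yq, q⟩ : PathsIn V)
  not_both_trivial : 0 < p.length ∨ 0 < q.length

/-- `T` is a strict `α`-monomial generating set for the ideal `I`, relative to the paths
`p` and `q`. -/
structure IsStrictMonomialGenSet (PA : IsPathAlgebra k V A) {va vb xp yq : V} (α : va ⟶ vb)
    (I : Set A) (T : Set A) (p : Quiver.Path xp va) (q : Quiver.Path vb yq) : Prop where
  data : IsMonGenData PA α I T p q
  mem : PA.basis (pathPAQ α p q) ∈ T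
  others_avoid : ∀ z ∈ T, z ≠ PA.basis (pathPAQ α p q) → PA.ElemAvoids α z
  no_proper_sub : ∀ u : PathsIn V, u.ProperlyDivides (pathPAQ α p q) → PA.basis u ∉ I
  no_overlap_p : ∀ u : PathsIn V, PA.OccursInSet u T →
    ¬ PathsIn.OverlapsLeftWith ⟨xp, va, p⟩ u
  no_overlap_q : ∀ u : PathsIn V, PA.OccursInSet u T →
    ¬ PathsIn.OverlapsLeftWith u ⟨vb, yq, q⟩
  no_divide : ∀ u : PathsIn V, PA.OccursInSet u T →
    ¬ u.Divides ⟨xp, va, p⟩ ∧ ¬ u.Divides ⟨vb, yq, q⟩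

/-- `T` is an `α`-monomial generating set: every element of `T` which is not (a scalar
multiple of) a path avoids `α`. -/
structure IsMonomialGenSet (PA : IsPathAlgebra k V A) {va vb : V} (α : va ⟶ vb)
    (I : Set A) (T : Set A) : Prop where
  finite : T.Finite
  rels : ∀ t ∈ T, PA.IsRelation t
  gen : I = ringIdealSpan T
  mono : ∀ t ∈ T, (∃ (u : PathsIn V) (c : k), c ≠ 0 ∧ t = c • PA.basis u) ∨ PA.ElemAvoids α t

end StrictMonomial

section Groebner

variable {k : Type} [Field k] {V : Type} [Quiver.{0} V] [Fintype V]
  {A : Type} [Ring A] [Algebra k A]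

/-- An admissible order on the set of paths of a quiver: a well-order compatible with left
and right multiplication, for which every subpath of a path precedes it. -/
structure AdmissibleOrder (V : Type) [Quiver.{0} V] : Type 1 where
  le : PathsIn V → PathsIn V → Prop
  refl : ∀ u, le u u
  trans : ∀ u v w, le u v → le v w → le u w
  antisymm : ∀ u v, le u v → le v u → u = v
  total : ∀ u v, le u v ∨ le v u
  wf : WellFounded (fun u w => le u w ∧ u ≠ w)
  right_compat : ∀ (u w : PathsIn V), le u w → ∀ (hc : u.2.1 = w.2.1) (z : V)
    (r : Quiver.Path w.2.1 z),
      le ⟨u.1, z, u.2.2.comp (r.cast hc.symm rfl)⟩ ⟨w.1, z, w.2.2.comp r⟩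
  left_compat : ∀ (u w : PathsIn V), le u w → ∀ (hc : u.1 = w.1) (z : V)
    (r : Quiver.Path z w.1),
      le ⟨z, u.2.1, (r.cast rfl hc.symm).comp u.2.2⟩ ⟨z, w.2.1, r.comp w.2.2⟩
  subpath_le : ∀ u w, PathsIn.Divides u w → le u w

/-- `IsTip PA O z u` : the path `u` is the `O`-largest path occurring in `z`. -/
def IsTip (PA : IsPathAlgebra k V A) (O : AdmissibleOrder V) (z : A) (u : PathsIn V) : Prop :=
  PA.OccursIn u z ∧ ∀ w : PathsIn V, PA.OccursIn w z → O.le w u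

/-- `G` is a Gröbner basis for the ideal `I` with respect to the admissible order `O`:
`G ⊆ I` and the tip of every non-zero element of `I` is divisible by the tip of some
element of `G`. -/
def IsGroebnerBasis (PA : IsPathAlgebra k V A) (O : AdmissibleOrder V)
    (I : Set A) (G : Set A) : Prop :=
  G ⊆ I ∧ ∀ z ∈ I, z ≠ 0 → ∃ g ∈ G, ∃ tg tz : PathsIn V,
    IsTip PA O g tg ∧ IsTip PA O z tz ∧ tg.Divides tz

/-- A strict `α`-monomial Gröbner basis for `I`, relative to the paths `p`, `q` (which
avoid `α`, have the appropriate endpoints, and at most one of which is trivial):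
`pαq ∈ 𝒢`, every other element of `𝒢` avoids `α`, and no tip of an element of `𝒢`
overlaps with `p` from the right, overlaps with `q` from the left, or divides `p` or `q`. -/
structure IsStrictMonomialGB (PA : IsPathAlgebra k V A) (O : AdmissibleOrder V)
    {va vb xp yq : V} (α : va ⟶ vb) (I : Set A) (G : Set A)
    (p : Quiver.Path xp va) (q : Quiver.Path vb yq) : Prop where
  gb : IsGroebnerBasis PA O I G
  p_avoids : AvoidsArrow α (⟨xp, va, p⟩ : PathsIn V)
  q_avoids : AvoidsArrow α (⟨vb, yq, q⟩ : PathsIn V)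
  not_both_trivial : 0 < p.length ∨ 0 < q.length
  mem : PA.basis (pathPAQ α p q) ∈ G
  others_avoid : ∀ z ∈ G, z ≠ PA.basis (pathPAQ α p q) → PA.ElemAvoids α z
  tips_no_overlap_p : ∀ g ∈ G, ∀ u : PathsIn V, IsTip PA O g u →
    ¬ PathsIn.OverlapsLeftWith ⟨xp, va, p⟩ u
  tips_no_overlap_q : ∀ g ∈ G, ∀ u : PathsIn V, IsTip PA O g u →
    ¬ PathsIn.OverlapsLeftWith u ⟨vb, yq, q⟩
  tips_no_divide : ∀ g ∈ G, ∀ u : PathsIn V, IsTip PA O g u →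
    ¬ u.Divides ⟨xp, va, p⟩ ∧ ¬ u.Divides ⟨vb, yq, q⟩

end Groebner




namespace StrictMonHelpers

variable {V : Type} [Quiver.{0} V]

/-- Splitting lemma for paths: if `x·y = x'·y'` and `y` is no longer than `y'`,
then `y'` ends with `y`. -/
lemma path_split : ∀ {b c : V} (y : Quiver.Path b c) {a b' : V} (x : Quiver.Path a b)
    (x' : Quiver.Path a b') (y' : Quiver.Path b' c),
    x.comp y = x'.comp y' → y.length ≤ y'.length →
    ∃ m : Quiver.Path b' b, x = x'.comp m ∧ y' = m.comp y := by
  intro b c y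
  induction y with
  | nil =>
    intro a b' x x' y' h _
    exact ⟨y', by simpa using h, by simp⟩
  | cons y0 e ih =>
    intro a b' x x' y' h hlen
    cases y' with
    | nil => simp [Quiver.Path.length] at hlen
    | cons y0' e' =>
      rw [Quiver.Path.comp_cons, Quiver.Path.comp_cons] at h
      injection h with h1 h2 h3 h4
      subst h1
      have h2' := eq_of_heq h3
      obtain ⟨m, hx, hy⟩ := ih x x' y0' h2' (by simpa [Quiver.Path.length] using hlen)
      refine ⟨m, hx, ?_⟩
      rw [Quiver.Path.comp_cons, ← hy, eq_of_heq h4]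

end StrictMonHelpers

namespace StrictMonHelpers

variable {V : Type} [Quiver.{0} V]

lemma sigma_path_eq {a b a' b' : V} {P : Quiver.Path a b} {P' : Quiver.Path a' b'}
    (h : (⟨a, b, P⟩ : PathsIn V) = ⟨a', b', P'⟩) :
    ∃ (_ : a = a') (_ : b = b'), HEq P P' := by
  injection h with h1 h2
  subst h1
  injection eq_of_heq h2 with h3 h4
  subst h3
  exact ⟨rfl, rfl, h4⟩

lemma divides_trans {u v w : PathsIn V} (h1 : u.Divides v) (h2 : v.Divides w) :
    u.Divides w := by
  obtain ⟨a, d, r, s, hv⟩ := h1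
  obtain ⟨a', d', r', s', hw⟩ := h2
  subst hv
  refine ⟨a', d', r'.comp r, s.comp s', ?_⟩
  rw [hw]
  simp [Quiver.Path.comp_assoc]

lemma len_le_of_divides {u w : PathsIn V} (h : u.Divides w) : u.len ≤ w.len := by
  obtain ⟨a, d, r, s, hw⟩ := h
  subst hw
  simp [PathsIn.len, Quiver.Path.length_comp]
  omega

lemma eq_of_divides_of_len {u w : PathsIn V} (h : u.Divides w) (hl : w.len ≤ u.len) :
    u = w := by
  obtain ⟨a, d, r, s, hw⟩ := h
  subst hw
  simp only [PathsIn.len, Quiver.Path.length_comp] at hl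
  have hr : r.length = 0 := by omega
  have hs : s.length = 0 := by omega
  cases r with
  | nil =>
    cases s with
    | nil => simp [Quiver.Path.nil_comp]
    | cons _ _ => simp [Quiver.Path.length] at hs
  | cons _ _ => simp [Quiver.Path.length] at hr

lemma self_divides (u : PathsIn V) : u.Divides u :=
  ⟨u.1, u.2.1, Quiver.Path.nil, Quiver.Path.nil, by
    obtain ⟨a, b, p⟩ := u; simp [Quiver.Path.nil_comp]⟩

/-- Trichotomy: a divisor of `pαq` contains `α`, or divides `p`, or divides `q`. -/
lemma divides_pathPAQ {va vb xp yq : V} (α : va ⟶ vb)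
    (p : Quiver.Path xp va) (q : Quiver.Path vb yq) (w : PathsIn V)
    (h : w.Divides (pathPAQ α p q)) :
    (arrowPath α).Divides w ∨ w.Divides ⟨xp, va, p⟩ ∨ w.Divides ⟨vb, yq, q⟩ := by
  obtain ⟨wa, wb, wp⟩ := w
  obtain ⟨a, d, r, s, heq⟩ := h
  obtain ⟨ha, hd, hpath⟩ := sigma_path_eq heq
  subst ha; subst hd
  have hpath' : (p.comp α.toPath).comp q = (r.comp wp).comp s := eq_of_heq hpath
  rcases le_total q.length s.length with hsq | hqs
  · obtain ⟨m, hx, hs⟩ := path_split q (p.comp α.toPath) (r.comp wp) s hpath' hsq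
    rcases Nat.lt_or_ge m.length 1 with hm | hm
    · interval_cases hml : m.length
      cases m with
      | nil =>
        -- wb = vb, p.comp α.toPath = (r.comp wp)
        simp only [Quiver.Path.comp_nil] at hx
        rcases Nat.lt_or_ge wp.length 1 with hw | hw
        · -- wp trivial
          cases wp with
          | nil =>
            right; right
            exact ⟨vb, yq, Quiver.Path.nil, q, by simp [Quiver.Path.nil_comp]⟩
          | cons _ _ => simp [Quiver.Path.length] at hw
        · obtain ⟨m'', hp'', hw''⟩ := path_split α.toPath p r wp hx
            (by simpa [Quiver.Hom.toPath, Quiver.Path.length] using hw)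
          left
          exact ⟨wa, vb, m'', Quiver.Path.nil, by rw [hw'']; rfl⟩
      | cons _ _ => simp [Quiver.Path.length] at hml
    · obtain ⟨m', hp', hm'⟩ := path_split α.toPath p (r.comp wp) m hx
        (by simpa [Quiver.Hom.toPath, Quiver.Path.length] using hm)
      right; left
      exact ⟨xp, va, r, m', by rw [hp']⟩
  · obtain ⟨m, hx, hq⟩ := path_split s (r.comp wp) (p.comp α.toPath) q hpath'.symm hqs
    rcases le_or_gt wp.length m.length with hwm | hmw
    · obtain ⟨m', hr', hm'⟩ := path_split wp r (p.comp α.toPath) m hx hwm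
      right; right
      exact ⟨vb, yq, m', s, by rw [hq, hm']⟩
    · have hx' : p.comp (α.toPath.comp m) = r.comp wp := by
        rw [← Quiver.Path.comp_assoc, ← hx]
      obtain ⟨mm, hp'', hw''⟩ := path_split (α.toPath.comp m) p r wp hx'
        (by simp [Quiver.Path.length_comp, Quiver.Hom.toPath, Quiver.Path.length]; omega)
      left
      exact ⟨wa, wb, mm, m, by
        rw [hw'']
        show _ = (⟨wa, wb, (mm.comp α.toPath).comp m⟩ : PathsIn V)
        rw [Quiver.Path.comp_assoc]⟩

end StrictMonHelpers


namespace StrictMonHelpers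

variable {k : Type} [Field k] {V : Type} [Quiver.{0} V] [Fintype V]
  {A : Type} [Ring A] [Algebra k A]

lemma occursIn_mul (PA : IsPathAlgebra k V A) {x y : A} {u : PathsIn V}
    (h : PA.OccursIn u (x * y)) :
    ∃ (a b c : V) (P : Quiver.Path a b) (Q : Quiver.Path b c),
      PA.OccursIn ⟨a, b, P⟩ x ∧ PA.OccursIn ⟨b, c, Q⟩ y ∧ u = ⟨a, c, P.comp Q⟩ := by
  by_contra hcon
  push_neg at hcon
  apply h
  have hx : ((PA.basis.repr x).sum fun i c => c • PA.basis i) = x := by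
    conv_rhs => rw [← PA.basis.linearCombination_repr x]
    rw [Finsupp.linearCombination_apply]
  have hy : ((PA.basis.repr y).sum fun i c => c • PA.basis i) = y := by
    conv_rhs => rw [← PA.basis.linearCombination_repr y]
    rw [Finsupp.linearCombination_apply]
  conv_lhs => rw [← hx, ← hy]
  rw [Finsupp.sum, Finsupp.sum, Finset.sum_mul]
  simp only [Finset.mul_sum]
  rw [map_sum, Finset.sum_apply']
  apply Finset.sum_eq_zero
  intro v hv
  rw [map_sum, Finset.sum_apply']
  apply Finset.sum_eq_zero
  intro w hw
  have hbz : PA.basis.repr (PA.basis v * PA.basis w) u = 0 := by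
    obtain ⟨a, b, P⟩ := v
    obtain ⟨b', c, Q⟩ := w
    by_cases hb : b = b'
    · subst hb
      rw [PA.mul_matched, PA.basis.repr_self]
      have hne : u ≠ ⟨a, c, P.comp Q⟩ :=
        hcon a b c P Q (Finsupp.mem_support_iff.mp hv) (Finsupp.mem_support_iff.mp hw)
      exact Finsupp.single_eq_of_ne (fun hh => hne hh)
    · rw [PA.mul_unmatched _ _ hb, map_zero, Finsupp.coe_zero, Pi.zero_apply]
  calc PA.basis.repr ((PA.basis.repr x v • PA.basis v) * (PA.basis.repr y w • PA.basis w)) u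
      = (PA.basis.repr x v * PA.basis.repr y w) •
          PA.basis.repr (PA.basis v * PA.basis w) u := by
        rw [smul_mul_smul_comm, map_smul, Finsupp.smul_apply]
    _ = 0 := by rw [hbz, smul_zero]

lemma occursIn_basis_self (PA : IsPathAlgebra k V A) (u : PathsIn V) :
    PA.OccursIn u (PA.basis u) := by
  unfold IsPathAlgebra.OccursIn
  rw [PA.basis.repr_self, Finsupp.single_eq_same]
  exact one_ne_zero

lemma occursIn_basis_eq (PA : IsPathAlgebra k V A) {u v : PathsIn V}
    (h : PA.OccursIn u (PA.basis v)) : u = v := by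
  unfold IsPathAlgebra.OccursIn at h
  rw [PA.basis.repr_self] at h
  by_contra hne
  exact h (Finsupp.single_eq_of_ne (fun hh => hne hh))

lemma mem_span_divides (PA : IsPathAlgebra k V A) {T : Set A} {z : A}
    (hz : z ∈ ringIdealSpan T) (u : PathsIn V) (hu : PA.OccursIn u z) :
    ∃ t ∈ T, ∃ w : PathsIn V, PA.OccursIn w t ∧ w.Divides u := by
  have hz' : z ∈ AddSubgroup.closure {y : A | ∃ r s : A, ∃ t ∈ T, y = r * t * s} := hz
  refine AddSubgroup.closure_induction
    (p := fun z _ => ∀ u : PathsIn V, PA.OccursIn u z →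
      ∃ t ∈ T, ∃ w : PathsIn V, PA.OccursIn w t ∧ w.Divides u)
    ?_ ?_ ?_ ?_ hz' u hu
  · intro x hx u hu
    obtain ⟨r, s, t, htT, rfl⟩ := hx
    obtain ⟨a, b, c, P, Q, hP, hQ, rfl⟩ := occursIn_mul PA hu
    obtain ⟨a', b', c', P', Q', hP', hQ', hPeq⟩ := occursIn_mul PA hP
    obtain ⟨rfl, rfl, hPP⟩ := sigma_path_eq hPeq
    exact ⟨t, htT, ⟨b', b, Q'⟩, hQ', a, c, P', Q, by rw [eq_of_heq hPP]⟩
  · intro u hu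
    exact absurd (by rw [map_zero]; rfl) hu
  · intro x y hx hy ihx ihy u hu
    rcases (by
      by_contra hb
      push_neg at hb
      apply hu
      rw [map_add, Finsupp.add_apply, not_not.mp hb.1, not_not.mp hb.2, add_zero] :
        PA.OccursIn u x ∨ PA.OccursIn u y) with h | h
    · exact ihx u h
    · exact ihy u h
  · intro x hx ihx u hu
    apply ihx u
    intro h0
    exact hu (by rw [map_neg, Finsupp.neg_apply, h0, neg_zero])

end StrictMonHelpers

/-- let `Λ = kQ/I` be a bound quiver algebra, `α` an arrow, and `p`, `q` paths
avoiding `α` with `t(p) = s(α)`, `s(q) = t(α)` and at most one of them trivial.  A finite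
generating set `T` of relations for `I` is strict `α`-monomial if and only if it satisfies
properties (P) non-trivially (i.e. the condition "no proper subpath of `pαq` lies in `I`"
is redundant). -/
theorem strictMonomialGenSet_iff_satisfiesP_nontrivially
    {k : Type} [Field k] {V : Type} [Quiver.{0} V] [Fintype V]
    [∀ a b : V, Fintype (a ⟶ b)]
    {A : Type} [Ring A] [Algebra k A] (PA : IsPathAlgebra k V A)
    (I : Set A) (hI : IsAdmissibleIdeal PA I)
    {Λ : Type} [Ring Λ] [Algebra k Λ] (P : QuotPresentation k I Λ)
    {va vb xp yq : V} (α : va ⟶ vb)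
    (p : Quiver.Path xp va) (q : Quiver.Path vb yq) (T : Set A)
    (hdata : IsMonGenData PA α I T p q) :
    IsStrictMonomialGenSet PA α I T p q ↔
      (PA.basis (pathPAQ α p q) ∈ T ∧ SatisfiesP PA α T p q) := by
  constructor
  · intro h
    exact ⟨h.mem, ⟨h.others_avoid, h.no_overlap_p, h.no_overlap_q, h.no_divide⟩⟩
  · rintro ⟨hmem, hP⟩
    refine ⟨hdata, hmem, hP.p1, ?_, hP.p2, hP.p2op, hP.p3⟩
    rintro u ⟨hdiv, hne⟩ hmemI
    rw [hdata.gen] at hmemI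
    obtain ⟨t, htT, w, hw, hwu⟩ :=
      StrictMonHelpers.mem_span_divides PA hmemI u (StrictMonHelpers.occursIn_basis_self PA u)
    have hwpaq : w.Divides (pathPAQ α p q) := StrictMonHelpers.divides_trans hwu hdiv
    by_cases ht : t = PA.basis (pathPAQ α p q)
    · subst ht
      have hwq : w = pathPAQ α p q := StrictMonHelpers.occursIn_basis_eq PA hw
      subst hwq
      have h1 := StrictMonHelpers.len_le_of_divides hwu
      exact hne (StrictMonHelpers.eq_of_divides_of_len hdiv h1)
    · have havoid : PA.ElemAvoids α t := hP.p1 t htT ht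
      rcases StrictMonHelpers.divides_pathPAQ α p q w hwpaq with hα | hp' | hq'
      · exact havoid w hw hα
      · exact (hP.p3 w ⟨t, htT, hw⟩).1 hp'
      · exact (hP.p3 w ⟨t, htT, hw⟩).2 hq'
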